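/- Let S be a set of cardinality n and Ŝ = S ∪ {n+1}. For 2 ≤ r ≤ n−1, the map sending a sparse-paving matroid M on S of rank r with basis set B to the matroid on Ŝ with basis set B ∪ {X ⊆ Ŝ : |X| = r, n+1 ∈ X} is a well-defined injection from the sparse-paving matroids of rank r on S into the sparse-paving matroids of rank r on Ŝ. In particular |Sparse_{n,r}| ≤ |Sparse_{n+1,r}|. -/

import Mathlib

/-- A circuit of a matroid: a minimal dependent subset of the ground set. -/
def Matroid.IsCircuit' {α : Type*} (M : Matroid α) (C : Set α) : Prop :=
  C ⊆ M.E ∧ ¬ M.Indep C ∧ ∀ D : Set α, D ⊂ C → M.Indep D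

/-- A matroid is paving if it has no circuit of cardinality less than its rank
(the common cardinality of its bases). -/
def Matroid.IsPaving {α : Type*} (M : Matroid α) : Prop :=
  ∀ C : Set α, M.IsCircuit' C → ∀ B : Set α, M.IsBase B → B.ncard ≤ C.ncard

/-- The set of matroids of rank `r` on the `n`-element ground set `Fin n`. -/
def MatroidSet (n r : ℕ) : Set (Matroid (Fin n)) :=
  {M | M.E = Set.univ ∧ ∀ B : Set (Fin n), M.IsBase B → B.ncard = r}

/-- The set of sparse-paving matroids of rank `r` on `Fin n`. -/
def SparseSet (n r : ℕ) : Set (Matroid (Fin n)) :=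
  {M | M ∈ MatroidSet n r ∧ M.IsPaving ∧ M✶.IsPaving}

open Set

/-- Any finite dependent set contains a circuit. -/
lemma exists_circuit_subset' {α : Type*} (M : Matroid α) :
    ∀ k : ℕ, ∀ C : Set α, C.Finite → C.ncard ≤ k → C ⊆ M.E → ¬ M.Indep C →
      ∃ C', C' ⊆ C ∧ M.IsCircuit' C' := by
  intro k
  induction k with
  | zero =>
    intro C hfin hc hE hI
    rw [Nat.le_zero, ncard_eq_zero hfin] at hc
    exact absurd (hc ▸ M.empty_indep) hI
  | succ k ih =>
    intro C hfin hc hE hI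
    by_cases h : ∀ D : Set α, D ⊂ C → M.Indep D
    · exact ⟨C, Subset.rfl, hE, hI, h⟩
    · push_neg at h
      obtain ⟨D, hDC, hD⟩ := h
      have hlt := ncard_lt_ncard hDC hfin
      obtain ⟨C', h1, h2⟩ := ih D (hfin.subset hDC.subset) (by omega)
        (hDC.subset.trans hE) hD
      exact ⟨C', h1.trans hDC.subset, h2⟩

/-- In a paving matroid with all bases of size `k`, sets of size `< k` are independent. -/
lemma small_indep' {α : Type*} (M : Matroid α) {k : ℕ} (hpav : M.IsPaving)
    (hbase : ∀ B, M.IsBase B → B.ncard = k) {I : Set α} (hfin : I.Finite)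
    (hIE : I ⊆ M.E) (hI : I.ncard < k) : M.Indep I := by
  by_contra h
  obtain ⟨C, hCI, hC⟩ := exists_circuit_subset' M I.ncard I hfin le_rfl hIE h
  obtain ⟨B, hB⟩ := M.exists_isBase
  have h1 := hpav C hC B hB
  have h2 := hbase B hB
  have h3 := ncard_le_ncard hCI hfin
  omega

/-- Independent sets in a matroid whose bases all have size `r`. -/
lemma indep_le' {α : Type*} [Finite α] (M : Matroid α) {r : ℕ}
    (hbase : ∀ B, M.IsBase B → B.ncard = r) {I : Set α} (hI : M.Indep I) :
    I.ncard ≤ r ∧ (I.ncard = r → M.IsBase I) := by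
  obtain ⟨B, hB, hIB⟩ := hI.exists_isBase_superset
  have hle := ncard_le_ncard hIB B.toFinite
  have hBr := hbase B hB
  refine ⟨by omega, fun hr => ?_⟩
  have : I = B := eq_of_subset_of_ncard_le hIB (by omega) B.toFinite
  rwa [this]

/-- The base predicate of the extended matroid. -/
def NB (n r : ℕ) (M : Matroid (Fin n)) (B : Set (Fin (n + 1))) : Prop :=
  (∃ B₀ : Set (Fin n), M.IsBase B₀ ∧ B = Fin.castSucc '' B₀) ∨ (B.ncard = r ∧ Fin.last n ∈ B)

lemma NB_image_iff (n r : ℕ) (M : Matroid (Fin n)) (B₀ : Set (Fin n)) :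
    NB n r M (Fin.castSucc '' B₀) ↔ M.IsBase B₀ := by
  constructor
  · rintro (⟨B₁, hB₁, he⟩ | ⟨-, hlast⟩)
    · rwa [Set.image_eq_image (Fin.castSucc_injective n) |>.mp he]
    · obtain ⟨x, -, hx⟩ := hlast
      exact absurd hx (Fin.castSucc_lt_last x).ne
  · intro h; exact Or.inl ⟨B₀, h, rfl⟩

lemma extend_lemma (n r : ℕ) (hr2 : 2 ≤ r) (hrn : r + 1 ≤ n) {M : Matroid (Fin n)}
    (hM : M ∈ SparseSet n r) :
    ∃ N : Matroid (Fin (n + 1)), N ∈ SparseSet (n + 1) r ∧ ∀ B, N.IsBase B ↔ NB n r M B := by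
  obtain ⟨⟨hE, hB⟩, hpav, hdpav⟩ := hM
  set Ind : Set (Fin (n + 1)) → Prop := fun I => I.ncard < r ∨ NB n r M I with hInddef
  have hcu : (univ : Set (Fin (n + 1))).ncard = n + 1 := by
    simp [ncard_univ]
  have hcu' : (univ : Set (Fin n)).ncard = n := by
    simp [ncard_univ]
  have hNBcard : ∀ B, NB n r M B → B.ncard = r := by
    rintro B (⟨B₀, hB₀, rfl⟩ | ⟨h, -⟩)
    · rw [ncard_image_of_injective _ (Fin.castSucc_injective n)]; exact hB B₀ hB₀
    · exact h
  have hIndcard : ∀ I, Ind I → I.ncard ≤ r := by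
    rintro I (h | h)
    · omega
    · exact (hNBcard I h).le
  have hsmallM : ∀ I : Set (Fin n), I.ncard < r → M.Indep I := fun I h =>
    small_indep' M hpav hB I.toFinite (by rw [hE]; exact subset_univ _) h
  have hdb : ∀ B, M✶.IsBase B → B.ncard = n - r := by
    intro B hB'
    have hBsub : B ⊆ M.E := by rw [hE]; exact subset_univ _
    have h1 := (M.dual_isBase_iff hBsub).mp hB'
    have h2 := hB _ h1
    rw [hE] at h2
    rw [ncard_diff (by rw [← hE]; exact hBsub) B.toFinite, hcu'] at h2
    have h3 : B.ncard ≤ n := by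
      have := ncard_le_ncard (subset_univ B) (toFinite _)
      omega
    omega
  -- independence axioms
  have hempty : Ind ∅ := Or.inl (by simp; omega)
  have hsub : ∀ ⦃I J : Set (Fin (n + 1))⦄, Ind J → I ⊆ J → Ind I := by
    intro I J hJ hIJ
    rcases hIJ.ssubset_or_eq with h | rfl
    · exact Or.inl (lt_of_lt_of_le (ncard_lt_ncard h J.toFinite) (hIndcard J hJ))
    · exact hJ
  have haug : ∀ ⦃I J : Set (Fin (n + 1))⦄, Ind I → Ind J → I.ncard < J.ncard →
      ∃ e ∈ J, e ∉ I ∧ Ind (insert e I) := by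
    intro I J hI hJ hlt
    have hJr := hIndcard J hJ
    have hex : ∃ e, e ∈ J ∧ e ∉ I := by
      by_contra h
      push_neg at h
      have : J ⊆ I := fun x hx => h x hx
      exact absurd (ncard_le_ncard this I.toFinite) (by omega)
    by_cases hsmall : I.ncard + 1 < r
    · obtain ⟨e, heJ, heI⟩ := hex
      exact ⟨e, heJ, heI, Or.inl (lt_of_le_of_lt (ncard_insert_le e I) hsmall)⟩
    · have hIr : I.ncard + 1 = r := by omega
      have hJNB : NB n r M J := hJ.resolve_left (by omega)
      by_cases hlastI : Fin.last n ∈ I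
      · obtain ⟨e, heJ, heI⟩ := hex
        refine ⟨e, heJ, heI, Or.inr (Or.inr ⟨?_, mem_insert_of_mem _ hlastI⟩)⟩
        rw [ncard_insert_of_notMem heI]; omega
      by_cases hlastJ : Fin.last n ∈ J
      · refine ⟨Fin.last n, hlastJ, hlastI, Or.inr (Or.inr ⟨?_, mem_insert _ _⟩)⟩
        rw [ncard_insert_of_notMem hlastI]; omega
      · obtain ⟨B₀, hB₀, rfl⟩ := hJNB.resolve_right (fun h => hlastJ h.2)
        have hIsub : I ⊆ Set.range (Fin.castSucc (n := n)) := by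
          intro x hx
          have hxne : x ≠ Fin.last n := fun h => hlastI (h ▸ hx)
          exact ⟨x.castPred hxne, by simp⟩
        set I₀ := Fin.castSucc ⁻¹' I with hI₀def
        have hIim : Fin.castSucc '' I₀ = I := image_preimage_eq_of_subset hIsub
        have hI₀card : I₀.ncard = I.ncard := by
          rw [← hIim, ncard_image_of_injective _ (Fin.castSucc_injective n)]
        have hI₀ : M.Indep I₀ := hsmallM I₀ (by omega)
        have hB₀r := hB B₀ hB₀
        obtain ⟨e, he, hins⟩ := hI₀.augment hB₀.indep (by
          rw [← I₀.toFinite.cast_ncard_eq, ← B₀.toFinite.cast_ncard_eq]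
          exact_mod_cast (by omega : I₀.ncard < B₀.ncard))
        have hecard : (insert e I₀).ncard = r := by
          rw [ncard_insert_of_notMem he.2]; omega
        have hbase : M.IsBase (insert e I₀) := (indep_le' M hB hins).2 hecard
        refine ⟨Fin.castSucc e, ⟨e, he.1, rfl⟩, fun h => he.2 h,
          Or.inr (Or.inl ⟨insert e I₀, hbase, ?_⟩)⟩
        rw [image_insert_eq, hIim]
  set N := (IndepMatroid.ofFinite (toFinite (univ : Set (Fin (n + 1)))) Ind hempty hsub haug
    (fun I _ => subset_univ I)).matroid with hNdef
  have hNind : ∀ I, N.Indep I ↔ Ind I := by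
    intro I
    rw [hNdef, IndepMatroid.matroid_indep_iff, IndepMatroid.ofFinite_indep]
  have hNE : N.E = univ := rfl
  have hNbase : ∀ B, N.IsBase B ↔ NB n r M B := by
    intro B
    rw [Matroid.isBase_iff_maximal_indep]
    constructor
    · rintro ⟨hBind, hmax⟩
      rcases (hNind B).mp hBind with hlt | hNB
      · exfalso
        obtain ⟨a, haB, halast⟩ : ∃ a, a ∉ B ∧ Fin.last n ∈ insert a B := by
          by_cases h : Fin.last n ∈ B
          · have hne : B ≠ univ := fun h' => by rw [h', hcu] at hlt; omega
            obtain ⟨a, ha⟩ := (ne_univ_iff_exists_notMem B).mp hne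
            exact ⟨a, ha, mem_insert_of_mem _ h⟩
          · exact ⟨Fin.last n, h, mem_insert _ _⟩
        have hins : Ind (insert a B) := by
          rcases lt_or_ge (insert a B).ncard r with h | h
          · exact Or.inl h
          · have := ncard_insert_le a B
            exact Or.inr (Or.inr ⟨by omega, halast⟩)
        exact haB (hmax ((hNind _).mpr hins) (subset_insert a B) (mem_insert a B))
      · exact hNB
    · intro hNB
      refine ⟨(hNind B).mpr (Or.inr hNB), fun I hI hBI => ?_⟩
      have hIr := hIndcard I ((hNind I).mp hI)
      exact (eq_of_subset_of_ncard_le hBI (by rw [hNBcard B hNB]; omega) I.toFinite).symm.subset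
  have hNbcard : ∀ B, N.IsBase B → B.ncard = r := fun B h => hNBcard B ((hNbase B).mp h)
  refine ⟨N, ⟨⟨hNE, hNbcard⟩, ?_, ?_⟩, hNbase⟩
  · -- paving
    intro C hC B hB'
    have h1 := hNbcard B hB'
    have h2 : ¬ Ind C := fun h => hC.2.1 ((hNind C).mpr h)
    have h3 : ¬ C.ncard < r := fun h => h2 (Or.inl h)
    omega
  · -- dual paving
    intro C hC B hB'
    have hBsub : B ⊆ N.E := by rw [hNE]; exact subset_univ _
    have hBcard : B.ncard = n + 1 - r := by
      have h1 := (N.dual_isBase_iff hBsub).mp hB'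
      have h2 := hNbcard _ h1
      rw [hNE, ncard_diff (subset_univ B) B.toFinite, hcu] at h2
      have h3 : B.ncard ≤ n + 1 := by
        have := ncard_le_ncard (subset_univ B) (toFinite _)
        omega
      omega
    by_contra hcon
    push_neg at hcon
    apply hC.2.1
    have hCsub : C ⊆ N.E := hC.1
    rw [Matroid.dual_indep_iff_exists hCsub]
    have hCcard : C.ncard ≤ n - r := by omega
    have hYcard : (univ \ C).ncard = n + 1 - C.ncard := by
      rw [ncard_diff (subset_univ C) C.toFinite, hcu]
    by_cases hl : Fin.last n ∈ C
    · -- the complement avoids `last`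
      have hYsub : univ \ C ⊆ Set.range (Fin.castSucc (n := n)) := by
        rintro x ⟨-, hx⟩
        have hxne : x ≠ Fin.last n := fun h => hx (h ▸ hl)
        exact ⟨x.castPred hxne, by simp⟩
      set Y₀ := Fin.castSucc ⁻¹' (univ \ C) with hY₀def
      have hYim : Fin.castSucc '' Y₀ = univ \ C := image_preimage_eq_of_subset hYsub
      have hY₀card : Y₀.ncard = (univ \ C).ncard := by
        rw [← hYim, ncard_image_of_injective _ (Fin.castSucc_injective n)]
      have hY₀le : Y₀.ncard ≤ n := by
        have := ncard_le_ncard (subset_univ Y₀) (toFinite _)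
        omega
      have hcompl : M✶.Indep (univ \ Y₀) := by
        apply small_indep' M✶ hdpav hdb (toFinite _)
        · rw [Matroid.dual_ground, hE]; exact subset_univ _
        · rw [ncard_diff (subset_univ Y₀) Y₀.toFinite, hcu']
          omega
      rw [Matroid.dual_indep_iff_exists (by rw [hE]; exact subset_univ _)] at hcompl
      obtain ⟨B₀, hB₀, hdisj⟩ := hcompl
      have hB₀Y : B₀ ⊆ Y₀ := by
        intro x hx
        by_contra hxY
        exact (hdisj.ne_of_mem ⟨mem_univ x, hxY⟩ hx) rfl
      refine ⟨Fin.castSucc '' B₀, (hNbase _).mpr (Or.inl ⟨B₀, hB₀, rfl⟩), ?_⟩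
      have : Fin.castSucc '' B₀ ⊆ univ \ C := by
        rw [← hYim]; exact image_mono hB₀Y
      exact (disjoint_sdiff_right.mono_right this).symm.symm
    · -- `last` is in the complement
      have hlY : Fin.last n ∈ univ \ C := ⟨mem_univ _, hl⟩
      set Y' : Set (Fin (n + 1)) := (univ \ C) \ {Fin.last n} with hY'def
      have hYm : Y'.ncard = n - C.ncard := by
        rw [hY'def, ncard_diff_singleton_of_mem hlY]
        omega
      have hYm' : r - 1 ≤ Y'.ncard := by omega
      obtain ⟨T, hTsub, hTcard⟩ := exists_subset_card_eq hYm'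
      have hlT : Fin.last n ∉ T := fun h => (hTsub h).2 rfl
      refine ⟨insert (Fin.last n) T, (hNbase _).mpr (Or.inr ⟨?_, mem_insert _ _⟩), ?_⟩
      · rw [ncard_insert_of_notMem hlT]; omega
      · have hsubY : insert (Fin.last n) T ⊆ univ \ C :=
          insert_subset hlY (hTsub.trans diff_subset)
        exact (disjoint_sdiff_right.mono_right hsubY).symm.symm

instance matroid_finite (m : ℕ) : Finite (Matroid (Fin m)) := by
  have hinj : Function.Injective (fun M : Matroid (Fin m) => (M.E, M.IsBase)) := by
    intro M₁ M₂ h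
    rw [Prod.mk.injEq] at h
    exact Matroid.ext_isBase h.1 (fun B _ => by rw [h.2])
  exact Finite.of_injective _ hinj

/-- Extending each sparse-paving matroid of rank `r` on `S = Fin n`
to `Ŝ = Fin (n+1)` by adding all `r`-subsets containing the new element `Fin.last n`
as bases gives a well-defined injection `Sparse_{n,r} ↪ Sparse_{n+1,r}`, whence
`|Sparse_{n,r}| ≤ |Sparse_{n+1,r}|`. -/
theorem stmt7 (n r : ℕ) (hn : 3 ≤ n) (hr2 : 2 ≤ r) (hrn : r ≤ n - 1) :
    (∃ f : SparseSet n r → SparseSet (n + 1) r,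
      Function.Injective f ∧
      ∀ M : SparseSet n r, ∀ B : Set (Fin (n + 1)),
        (f M : Matroid (Fin (n + 1))).IsBase B ↔
          ((∃ B₀ : Set (Fin n), (M : Matroid (Fin n)).IsBase B₀ ∧ B = Fin.castSucc '' B₀) ∨
            (B.ncard = r ∧ Fin.last n ∈ B))) ∧
    (SparseSet n r).ncard ≤ (SparseSet (n + 1) r).ncard := by
  have hrn' : r + 1 ≤ n := by omega
  have key : ∀ M : SparseSet n r, ∃ N : Matroid (Fin (n + 1)),
      N ∈ SparseSet (n + 1) r ∧ ∀ B, N.IsBase B ↔ NB n r M.1 B :=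
    fun M => extend_lemma n r hr2 hrn' M.2
  choose g hg1 hg2 using key
  have hginj : Function.Injective (fun M => (⟨g M, hg1 M⟩ : SparseSet (n + 1) r)) := by
    intro M₁ M₂ h
    rw [Subtype.mk.injEq] at h
    apply Subtype.ext
    apply Matroid.ext_isBase
    · rw [M₁.2.1.1, M₂.2.1.1]
    · intro B hB
      rw [← NB_image_iff n r M₁.1 B, ← NB_image_iff n r M₂.1 B,
        ← hg2 M₁, ← hg2 M₂, h]
  refine ⟨⟨fun M => ⟨g M, hg1 M⟩, hginj, fun M B => hg2 M B⟩, ?_⟩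
  have hfin : (SparseSet (n + 1) r).Finite := Set.toFinite _
  calc (SparseSet n r).ncard = Nat.card (SparseSet n r) :=
        (Nat.card_coe_set_eq _).symm
    _ ≤ Nat.card (SparseSet (n + 1) r) :=
        Nat.card_le_card_of_injective _ hginj
    _ = (SparseSet (n + 1) r).ncard := Nat.card_coe_set_eq _
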